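/- Let λ > 0, let J be a finite index set, and let (x_j)_{j∈J} be vectors in ℝ^d whose linear span has dimension at most r. Let A = λ·I_d + ∑_{j∈J} x_j x_jᵀ. Then ∑_{j∈J} x_jᵀ A⁻¹ x_j ≤ r. -/

import Mathlib

set_option maxHeartbeats 1000000

open Matrix

private lemma trace_mul_vecMulVec' {d : ℕ} (M : Matrix (Fin d) (Fin d) ℝ)
    (v w : Fin d → ℝ) : trace (M * vecMulVec v w) = w ⬝ᵥ M.mulVec v := by
  simp only [trace, diag_apply, mul_apply, vecMulVec_apply, dotProduct, mulVec,
    Finset.mul_sum]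
  refine Finset.sum_congr rfl fun i _ => Finset.sum_congr rfl fun k _ => by ring

private lemma vecMulVec_mulVec' {d : ℕ} (v w u : Fin d → ℝ) :
    vecMulVec v w *ᵥ u = (w ⬝ᵥ u) • v := by
  ext i
  simp [mulVec, vecMulVec_apply, dotProduct, Finset.mul_sum, mul_comm, mul_assoc, mul_left_comm]

private lemma sum_mulVec' {d : ℕ} {J : Type*} [Fintype J]
    (M : J → Matrix (Fin d) (Fin d) ℝ) (v : Fin d → ℝ) :
    (∑ j, M j) *ᵥ v = ∑ j, (M j) *ᵥ v := by
  ext i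
  simp only [mulVec, dotProduct, Matrix.sum_apply, Finset.sum_apply, Finset.sum_mul]
  rw [Finset.sum_comm]

private lemma dotProduct_sum' {d : ℕ} {J : Type*} [Fintype J]
    (v : Fin d → ℝ) (f : J → (Fin d → ℝ)) :
    v ⬝ᵥ (∑ j, f j) = ∑ j, v ⬝ᵥ f j := by
  simp only [dotProduct, Finset.sum_apply, Finset.mul_sum]
  rw [Finset.sum_comm]

private lemma B_posSemidef {d : ℕ} {J : Type*} [Fintype J] (x : J → (Fin d → ℝ)) :
    (∑ j, vecMulVec (x j) (x j)).PosSemidef := by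
  rw [posSemidef_iff_dotProduct_mulVec]
  constructor
  · ext i k
    simp [conjTranspose_apply, Matrix.sum_apply, vecMulVec_apply, mul_comm]
  · intro v
    rw [sum_mulVec', dotProduct_sum']
    refine Finset.sum_nonneg fun j _ => ?_
    rw [vecMulVec_mulVec', dotProduct_smul]
    have hstar : (star v : Fin d → ℝ) = v := by simp
    rw [hstar, smul_eq_mul, dotProduct_comm]
    exact mul_self_nonneg _

/-- With `A = λ I + ∑_{j∈J} x_j x_jᵀ` and the span of the `x_j` of
dimension at most `r`, we have `∑_{j∈J} x_jᵀ A⁻¹ x_j ≤ r`. -/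
theorem sum_quadratic_inv_le_rank
    {d r : ℕ} {J : Type*} [Fintype J]
    (lam : ℝ) (hlam : 0 < lam)
    (x : J → (Fin d → ℝ))
    (hx : Module.finrank ℝ (Submodule.span ℝ (Set.range x)) ≤ r)
    (A : Matrix (Fin d) (Fin d) ℝ)
    (hA : A = lam • (1 : Matrix (Fin d) (Fin d) ℝ) + ∑ j, vecMulVec (x j) (x j)) :
    ∑ j, x j ⬝ᵥ A⁻¹.mulVec (x j) ≤ (r : ℝ) := by
  classical
  have hBsd := B_posSemidef x
  set B : Matrix (Fin d) (Fin d) ℝ := ∑ j, vecMulVec (x j) (x j) with hBdef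
  have hB : B.IsHermitian := hBsd.1
  set μ : Fin d → ℝ := hB.eigenvalues with hμdef
  have hμ0 : ∀ i, 0 ≤ μ i := hBsd.eigenvalues_nonneg
  have hpos : ∀ i, 0 < lam + μ i := fun i => by linarith [hμ0 i]
  set U : Matrix (Fin d) (Fin d) ℝ := (hB.eigenvectorUnitary : Matrix (Fin d) (Fin d) ℝ)
    with hUdef
  have hU1 : U * star U = 1 := (Matrix.mem_unitaryGroup_iff).mp hB.eigenvectorUnitary.2
  have hU2 : star U * U = 1 := (Matrix.mem_unitaryGroup_iff').mp hB.eigenvectorUnitary.2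
  have key : ∀ y : Matrix (Fin d) (Fin d) ℝ, star U * (U * y) = y := fun y => by
    rw [← mul_assoc, hU2, one_mul]
  have hBspec : B = U * diagonal μ * star U := by
    have := hB.spectral_theorem
    simpa using this
  have hdiag : diagonal (fun i => lam + μ i)
      = lam • (1 : Matrix (Fin d) (Fin d) ℝ) + diagonal μ := by
    rw [smul_one_eq_diagonal, diagonal_add]
  have hAspec : A = U * diagonal (fun i => lam + μ i) * star U := by
    rw [hA, hdiag, mul_add, add_mul, hBspec]
    congr 1
    rw [mul_smul_comm, smul_mul_assoc, mul_one, hU1]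
  have hAinv : A⁻¹ = U * diagonal (fun i => (lam + μ i)⁻¹) * star U := by
    apply inv_eq_right_inv
    rw [hAspec]
    simp only [mul_assoc]
    rw [key, ← mul_assoc (diagonal fun i => lam + μ i), diagonal_mul_diagonal]
    have h1 : (fun i => (lam + μ i) * (lam + μ i)⁻¹) = fun _ => (1 : ℝ) := by
      funext i; exact mul_inv_cancel₀ (hpos i).ne'
    rw [h1, diagonal_one, one_mul, hU1]
  have hsum : ∑ j, x j ⬝ᵥ A⁻¹.mulVec (x j) = trace (A⁻¹ * B) := by
    rw [hBdef, Finset.mul_sum, trace_sum]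
    exact Finset.sum_congr rfl fun j _ => (trace_mul_vecMulVec' _ _ _).symm
  have htr : trace (A⁻¹ * B) = ∑ i, (lam + μ i)⁻¹ * μ i := by
    rw [hAinv, hBspec]
    simp only [mul_assoc]
    rw [key, ← mul_assoc (diagonal fun i => (lam + μ i)⁻¹), diagonal_mul_diagonal,
      ← mul_assoc, trace_mul_cycle, hU2, one_mul, trace_diagonal]
  have hrank : B.rank ≤ r := by
    have hle : LinearMap.range B.mulVecLin ≤ Submodule.span ℝ (Set.range x) := by
      rintro _ ⟨v, rfl⟩
      have hBv : B.mulVecLin v = ∑ j, (x j ⬝ᵥ v) • x j := by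
        rw [mulVecLin_apply, hBdef, sum_mulVec']
        exact Finset.sum_congr rfl fun j _ => vecMulVec_mulVec' _ _ _
      rw [hBv]
      exact Submodule.sum_mem _ fun j _ => Submodule.smul_mem _ _
        (Submodule.subset_span (Set.mem_range_self j))
    calc B.rank ≤ Module.finrank ℝ (Submodule.span ℝ (Set.range x)) :=
          Submodule.finrank_mono hle
      _ ≤ r := hx
  have hcard : ((Finset.univ.filter (fun i => μ i ≠ 0)).card : ℝ) ≤ r := by
    have h1 : (Finset.univ.filter (fun i => μ i ≠ 0)).card
        = Fintype.card {i // μ i ≠ 0} := (Fintype.card_subtype _).symm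
    rw [h1, ← hB.rank_eq_card_non_zero_eigs]
    exact_mod_cast hrank
  rw [hsum, htr]
  calc ∑ i, (lam + μ i)⁻¹ * μ i
      ≤ ∑ i ∈ Finset.univ.filter (fun i => μ i ≠ 0), 1 := by
        rw [← Finset.sum_filter_add_sum_filter_not Finset.univ (fun i => μ i ≠ 0)
          (fun i => (lam + μ i)⁻¹ * μ i)]
        have h2 : ∑ i ∈ Finset.univ.filter (fun i => ¬ μ i ≠ 0), (lam + μ i)⁻¹ * μ i = 0 := by
          apply Finset.sum_eq_zero
          intro i hi
          simp only [Finset.mem_filter, not_not] at hi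
          rw [hi.2, mul_zero]
        rw [h2, add_zero]
        apply Finset.sum_le_sum
        intro i _
        rw [inv_mul_le_iff₀ (hpos i), mul_one]
        linarith [hμ0 i]
    _ ≤ (r : ℝ) := by simpa using hcard
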